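/- For any vector x = (x_1,...,x_n) of nonnegative integers, define Φ(x) = Σ_i (x_i - x̄)², s_i(x) = |{j : x_j = x_i - 1}|, l_i(x) = |{j : x_j = x_i + 1}|, u₁(x) = Σ_i Σ_{j:|x_i-x_j|>1} |x_i - x_j|, u₂(x) = Σ_i (s_i(x) - l_i(x))², and u(x) = u₁(x)/n + u₂(x)/n². Then Φ(x) - u(x) ≥ 0. -/

import Mathlib

open Finset

lemma aux_L1 {n : ℕ} (a : Fin n → ℤ) :
    ∑ i, ∑ j, (if a j = a i - 1 then (1:ℤ) else 0)
      = ∑ i, ∑ j, (if a j = a i + 1 then (1:ℤ) else 0) := by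
  rw [Finset.sum_comm]
  exact Finset.sum_congr rfl fun i _ => Finset.sum_congr rfl fun j _ =>
    if_congr (by omega) rfl rfl

lemma aux_L2 {n : ℕ} (a : Fin n → ℤ) :
    ∑ i, (∑ j, if a j = a i - 1 then (1:ℤ) else 0) * (∑ k, if a k = a i - 1 then (1:ℤ) else 0)
      = ∑ i, (∑ j, if a j = a i then (1:ℤ) else 0) * (∑ k, if a k = a i + 1 then (1:ℤ) else 0) := by
  simp only [Finset.sum_mul_sum, ite_zero_mul_ite_zero, one_mul, ← ite_and]
  rw [Finset.sum_comm]
  refine Finset.sum_congr rfl fun j _ => ?_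
  rw [Finset.sum_comm]
  exact Finset.sum_congr rfl fun k _ => Finset.sum_congr rfl fun i _ =>
    if_congr (by omega) rfl rfl

lemma aux_key {n : ℕ} (a : Fin n → ℤ) :
    2 * ∑ i, (((univ.filter (fun j : Fin n => a j = a i - 1)).card : ℤ)
        - ((univ.filter (fun j : Fin n => a j = a i + 1)).card : ℤ))^2
      ≤ (n:ℤ) * ∑ i, (((univ.filter (fun j : Fin n => a j = a i - 1)).card : ℤ)
        + ((univ.filter (fun j : Fin n => a j = a i + 1)).card : ℤ)) := by
  have hcard : ∀ p : Fin n → Prop, ∀ _ : DecidablePred p,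
      ((univ.filter p).card : ℤ) = ∑ j, if p j then (1:ℤ) else 0 := by
    intro p hp
    rw [Finset.card_filter]
    push_cast
    rfl
  set S : Fin n → ℤ := fun i => ∑ j, if a j = a i - 1 then (1:ℤ) else 0 with hS
  set L : Fin n → ℤ := fun i => ∑ j, if a j = a i + 1 then (1:ℤ) else 0 with hL
  set E : Fin n → ℤ := fun i => ∑ j, if a j = a i then (1:ℤ) else 0 with hE
  have hcS : ∀ i, ((univ.filter (fun j : Fin n => a j = a i - 1)).card : ℤ) = S i :=
    fun i => hcard _ _
  have hcL : ∀ i, ((univ.filter (fun j : Fin n => a j = a i + 1)).card : ℤ) = L i :=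
    fun i => hcard _ _
  simp only [hcS, hcL]
  have hSn : ∀ i, 0 ≤ S i := fun i => Finset.sum_nonneg fun j _ => by positivity
  have hLn : ∀ i, 0 ≤ L i := fun i => Finset.sum_nonneg fun j _ => by positivity
  have hEL : ∀ i, E i + L i ≤ (n:ℤ) := by
    intro i
    rw [hE, hL, ← Finset.sum_add_distrib]
    calc ∑ j, ((if a j = a i then (1:ℤ) else 0) + (if a j = a i + 1 then (1:ℤ) else 0))
        ≤ ∑ _j : Fin n, (1:ℤ) := Finset.sum_le_sum fun j _ => by split_ifs <;> omega
      _ = n := by simp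
  have h1 : ∑ i, S i = ∑ i, L i := aux_L1 a
  have h2 : ∑ i, S i * S i = ∑ i, E i * L i := aux_L2 a
  have hexp : ∑ i, (S i - L i)^2
      = (∑ i, S i * S i) + (∑ i, L i * L i) - 2 * ∑ i, S i * L i := by
    rw [← Finset.sum_add_distrib, Finset.mul_sum, ← Finset.sum_sub_distrib]
    exact Finset.sum_congr rfl fun i _ => by ring
  have hC : 0 ≤ ∑ i, S i * L i :=
    Finset.sum_nonneg fun i _ => mul_nonneg (hSn i) (hLn i)
  have hbound : (∑ i, E i * L i) + (∑ i, L i * L i) ≤ (n:ℤ) * ∑ i, L i := by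
    rw [← Finset.sum_add_distrib, Finset.mul_sum]
    refine Finset.sum_le_sum fun i _ => ?_
    have h := hEL i
    have h' := hLn i
    nlinarith
  calc 2 * ∑ i, (S i - L i)^2
      = 2*((∑ i, S i * S i) + (∑ i, L i * L i)) - 4 * ∑ i, S i * L i := by
        rw [hexp]; ring
    _ ≤ 2*((∑ i, E i * L i) + (∑ i, L i * L i)) := by rw [← h2]; linarith
    _ ≤ 2*((n:ℤ) * ∑ i, L i) := by linarith
    _ = (n:ℤ) * ((∑ i, S i) + (∑ i, L i)) := by rw [h1]; ring
    _ = (n:ℤ) * ∑ i, (S i + L i) := by rw [Finset.sum_add_distrib]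


theorem stmt_9 (n : ℕ) (x : Fin n → ℕ) :
    let xbar : ℝ := (∑ k, (x k : ℝ)) / n
    let Φ : ℝ := ∑ i, ((x i : ℝ) - xbar) ^ 2
    let s : Fin n → ℕ := fun i => (Finset.univ.filter (fun j : Fin n => (x j : ℤ) = (x i : ℤ) - 1)).card
    let l : Fin n → ℕ := fun i => (Finset.univ.filter (fun j : Fin n => (x j : ℤ) = (x i : ℤ) + 1)).card
    let u₁ : ℝ := ∑ i, ∑ j ∈ Finset.univ.filter (fun j : Fin n => 1 < |(x i : ℤ) - (x j : ℤ)|),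
        |(x i : ℝ) - (x j : ℝ)|
    let u₂ : ℝ := ∑ i, ((s i : ℝ) - (l i : ℝ)) ^ 2
    Φ - (u₁ / n + u₂ / n ^ 2) ≥ 0 := by
  intro xbar Φ s l u₁ u₂
  rcases Nat.eq_zero_or_pos n with hn0 | hn0
  · subst hn0
    have h1 : Φ = 0 := by simp [Φ]
    have h2 : u₁ = 0 := by simp [u₁]
    have h3 : u₂ = 0 := by simp [u₂]
    rw [h1, h2, h3]; norm_num
  have hn' : (0:ℝ) < n := by exact_mod_cast hn0
  set a : Fin n → ℝ := fun i => (x i : ℝ) with ha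
  set T : ℝ := ∑ i, ∑ j, (a i - a j)^2 with hT
  -- Φ in closed form
  have e1 : Φ = (∑ i, (a i)^2) - (∑ k, a k)^2 / n := by
    have hΦ : Φ = ∑ i, (a i - (∑ k, a k)/n)^2 := rfl
    rw [hΦ]
    have h : ∀ i : Fin n, (a i - (∑ k, a k)/n)^2
        = (a i)^2 - (2*((∑ k, a k)/n))*(a i) + ((∑ k, a k)/n)^2 := fun i => by ring
    rw [Finset.sum_congr rfl fun i _ => h i, Finset.sum_add_distrib, Finset.sum_sub_distrib,
      ← Finset.mul_sum, Finset.sum_const, Finset.card_univ, Fintype.card_fin, nsmul_eq_mul]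
    field_simp
    ring
  have e2 : T = 2*(n:ℝ)*(∑ i, (a i)^2) - 2*(∑ k, a k)^2 := by
    have hQ : ∀ i : Fin n, ∑ j, (a i - a j)^2
        = (n:ℝ)*(a i)^2 - (2*(∑ k, a k))*(a i) + ∑ k, (a k)^2 := by
      intro i
      have h : ∀ j : Fin n, (a i - a j)^2 = (a i)^2 - (2*(a i))*(a j) + (a j)^2 :=
        fun j => by ring
      rw [Finset.sum_congr rfl fun j _ => h j, Finset.sum_add_distrib, Finset.sum_sub_distrib,
        ← Finset.mul_sum, Finset.sum_const, Finset.card_univ, Fintype.card_fin, nsmul_eq_mul]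
      ring
    rw [hT, Finset.sum_congr rfl fun i _ => hQ i, Finset.sum_add_distrib, Finset.sum_sub_distrib,
      ← Finset.mul_sum, ← Finset.mul_sum, Finset.sum_const, Finset.card_univ, Fintype.card_fin,
      nsmul_eq_mul]
    ring
  have hA : Φ = T / (2*(n:ℝ)) := by
    rw [e1, e2]; field_simp
  set Preal : ℝ := ∑ i, ((s i : ℝ) + (l i : ℝ)) with hP
  have hB : 2*u₁ + Preal ≤ T := by
    have hi : ∀ i : Fin n,
        2 * (∑ j ∈ univ.filter (fun j : Fin n => 1 < |(x i : ℤ) - (x j : ℤ)|), |a i - a j|)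
          + ((s i : ℝ) + (l i : ℝ)) ≤ ∑ j, (a i - a j)^2 := by
      intro i
      set F₁ := univ.filter (fun j : Fin n => 1 < |(x i : ℤ) - (x j : ℤ)|) with hF1
      set F₂ := univ.filter (fun j : Fin n => |(x i : ℤ) - (x j : ℤ)| = 1) with hF2
      have hdisj : Disjoint F₁ F₂ := by
        rw [Finset.disjoint_left]
        intro j h1 h2
        simp only [hF1, hF2, Finset.mem_filter] at h1 h2
        omega
      have hstep1 : ∑ j ∈ F₁ ∪ F₂, (a i - a j)^2 ≤ ∑ j, (a i - a j)^2 :=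
        Finset.sum_le_sum_of_subset_of_nonneg (Finset.subset_univ _)
          (fun j _ _ => sq_nonneg _)
      rw [Finset.sum_union hdisj] at hstep1
      have hcast : ∀ j : Fin n, a i - a j = (((x i:ℤ) - (x j:ℤ) : ℤ) : ℝ) := by
        intro j; push_cast [ha]; ring
      have hstep2 : ∑ j ∈ F₁, 2*|a i - a j| ≤ ∑ j ∈ F₁, (a i - a j)^2 := by
        refine Finset.sum_le_sum fun j hj => ?_
        simp only [hF1, Finset.mem_filter] at hj
        have h2 : (2:ℤ) ≤ |(x i:ℤ) - (x j:ℤ)| := by omega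
        have h3 : (2:ℝ) ≤ |a i - a j| := by
          rw [hcast j, ← Int.cast_abs]
          exact_mod_cast h2
        nlinarith [sq_abs (a i - a j)]
      have hstep3 : ∑ j ∈ F₂, (1:ℝ) ≤ ∑ j ∈ F₂, (a i - a j)^2 := by
        refine Finset.sum_le_sum fun j hj => ?_
        simp only [hF2, Finset.mem_filter] at hj
        rw [hcast j]
        rcases (abs_eq (by norm_num : (0:ℤ) ≤ 1)).mp hj.2 with h | h <;> rw [h] <;> norm_num
      have hcard : ∑ j ∈ F₂, (1:ℝ) = (s i : ℝ) + (l i : ℝ) := by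
        rw [Finset.sum_const, nsmul_eq_mul, mul_one]
        have hsplit : F₂ = univ.filter (fun j : Fin n => (x j:ℤ) = (x i:ℤ) - 1)
            ∪ univ.filter (fun j : Fin n => (x j:ℤ) = (x i:ℤ) + 1) := by
          rw [← Finset.filter_or]
          refine Finset.filter_congr fun j _ => ?_
          rw [abs_eq (by norm_num : (0:ℤ) ≤ 1)]
          constructor <;> intro h <;> omega
        have hd2 : Disjoint (univ.filter (fun j : Fin n => (x j:ℤ) = (x i:ℤ) - 1))
            (univ.filter (fun j : Fin n => (x j:ℤ) = (x i:ℤ) + 1)) := by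
          rw [Finset.disjoint_left]
          intro j h1 h2
          simp only [Finset.mem_filter] at h1 h2
          omega
        rw [hsplit, Finset.card_union_of_disjoint hd2]
        push_cast
        rfl
      calc 2*(∑ j ∈ F₁, |a i - a j|) + ((s i:ℝ) + (l i:ℝ))
          = (∑ j ∈ F₁, 2*|a i - a j|) + ∑ j ∈ F₂, (1:ℝ) := by rw [Finset.mul_sum, hcard]
        _ ≤ (∑ j ∈ F₁, (a i - a j)^2) + ∑ j ∈ F₂, (a i - a j)^2 := add_le_add hstep2 hstep3
        _ ≤ ∑ j, (a i - a j)^2 := hstep1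
    have hsum := Finset.sum_le_sum fun i (_ : i ∈ (univ : Finset (Fin n))) => hi i
    rw [Finset.sum_add_distrib, ← Finset.mul_sum] at hsum
    exact hsum
  have hs : ∀ i, s i = (univ.filter (fun j : Fin n => (x j:ℤ) = (x i:ℤ) - 1)).card :=
    fun i => rfl
  have hl : ∀ i, l i = (univ.filter (fun j : Fin n => (x j:ℤ) = (x i:ℤ) + 1)).card :=
    fun i => rfl
  have hu2cast : 2 * u₂ ≤ (n:ℝ) * Preal := by
    have h := aux_key (fun i => (x i : ℤ))
    simp only [← hs, ← hl] at h
    rw [hP]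
    have hu₂ : u₂ = ∑ i, ((s i : ℝ) - (l i : ℝ))^2 := rfl
    rw [hu₂]
    exact_mod_cast h
  have hPn : (0:ℝ) ≤ Preal := by
    rw [hP]; exact Finset.sum_nonneg fun i _ => by positivity
  rw [ge_iff_le, sub_nonneg, hA]
  have k1 : u₂ / (n:ℝ)^2 ≤ Preal / (2*(n:ℝ)) := by
    rw [div_le_div_iff₀ (by positivity) (by positivity)]
    nlinarith [mul_le_mul_of_nonneg_left hu2cast hn'.le]
  calc u₁/(n:ℝ) + u₂/(n:ℝ)^2 ≤ (2*u₁)/(2*(n:ℝ)) + Preal/(2*(n:ℝ)) := by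
        rw [mul_div_mul_left _ _ (two_ne_zero)]
        exact add_le_add le_rfl k1
    _ = (2*u₁ + Preal)/(2*(n:ℝ)) := by rw [← add_div]
    _ ≤ T/(2*(n:ℝ)) := by gcongr
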